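/- Let Y be a random variable with probability density f(x) = Σ_{i=1}^n ω_i η_i e^{−η_i x} on (0, ∞) (a finite mixture of exponentials), where n ≥ 1, η_i > 0, ω_i > 0 and Σ_{i=1}^n ω_i = 1, and let A₀ > 0 and K' > 0. Then the perpetual-put payoff expectation is given explicitly by: if K' ≤ A₀, E[(K' − A₀ e^{−Y})⁺] = Σ_{i=1}^n ω_i (K'/A₀)^{η_i} · K'/(1 + η_i); and if K' ≥ A₀, E[(K' − A₀ e^{−Y})⁺] = Σ_{i=1}^n ω_i ( K' − A₀ · η_i/(1 + η_i) ), where x⁺ := max{x, 0}. -/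

import Mathlib

open MeasureTheory Set Filter


lemma my_integral_exp_neg_mul_Ioi {b : ℝ} (hb : 0 < b) (c : ℝ) :
    ∫ x in Set.Ioi c, Real.exp (-b * x) = Real.exp (-b * c) / b := by
  have hder : ∀ x ∈ Set.Ioi c,
      HasDerivAt (fun x => -Real.exp (-b * x) / b) (Real.exp (-b * x)) x := by
    intro x _
    have h1 : HasDerivAt (fun x : ℝ => -b * x) (-b) x := by
      simpa using (hasDerivAt_id x).const_mul (-b)
    have h2 := (h1.exp.neg).div_const b
    exact h2.congr_deriv (by field_simp)
  have htend : Tendsto (fun x => -Real.exp (-b * x) / b) atTop (nhds 0) := by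
    have h0 : Tendsto (fun x : ℝ => b * x) atTop atTop := tendsto_id.const_mul_atTop hb
    have h1 : Tendsto (fun x : ℝ => -b * x) atTop atBot := by
      simpa [neg_mul] using tendsto_neg_atBot_iff.mpr h0
    have : Tendsto (fun x => Real.exp (-b * x)) atTop (nhds 0) :=
      Real.tendsto_exp_atBot.comp h1
    have := (this.neg).div_const b
    simpa using this
  have hcont : ContinuousWithinAt (fun x => -Real.exp (-b * x) / b) (Set.Ici c) c :=
    (Continuous.continuousWithinAt (by continuity))
  have := integral_Ioi_of_hasDerivAt_of_tendsto hcont hder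
    ((exp_neg_integrableOn_Ioi c hb).congr_fun (fun x _ => by ring_nf) measurableSet_Ioi) htend
  rw [this]; ring

lemma my_expand (K' A₀ η : ℝ) : ∀ x : ℝ,
    (K' - A₀ * Real.exp (-x)) * (η * Real.exp (-η * x)) =
      K' * η * Real.exp (-η * x) - A₀ * η * Real.exp (-(1 + η) * x) := by
  intro x
  have : Real.exp (-(1 + η) * x) = Real.exp (-x) * Real.exp (-η * x) := by
    rw [← Real.exp_add]; ring_nf
  rw [this]; ring

lemma my_integrable (K' A₀ η c : ℝ) (hη : 0 < η) :
    IntegrableOn (fun x => (K' - A₀ * Real.exp (-x)) * (η * Real.exp (-η * x)))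
      (Set.Ioi c) := by
  have h1 : IntegrableOn (fun x => K' * η * Real.exp (-η * x)) (Set.Ioi c) :=
    (exp_neg_integrableOn_Ioi c hη).const_mul _
  have h2 : IntegrableOn (fun x => A₀ * η * Real.exp (-(1 + η) * x)) (Set.Ioi c) :=
    (exp_neg_integrableOn_Ioi c (by linarith)).const_mul _
  refine IntegrableOn.congr_fun ?_ (fun x _ => (my_expand K' A₀ η x).symm) measurableSet_Ioi
  exact h1.sub h2

lemma my_int_aux (η : ℝ) (hη : 0 < η) (A₀ K' c : ℝ) :
    ∫ x in Set.Ioi c, (K' - A₀ * Real.exp (-x)) * (η * Real.exp (-η * x)) =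
      K' * Real.exp (-η * c) - A₀ * (η / (1 + η)) * Real.exp (-(1 + η) * c) := by
  have h1η : (0:ℝ) < 1 + η := by linarith
  rw [setIntegral_congr_fun measurableSet_Ioi (fun x _ => my_expand K' A₀ η x)]
  rw [integral_sub ((exp_neg_integrableOn_Ioi c hη).const_mul _)
    ((exp_neg_integrableOn_Ioi c h1η).const_mul _),
    integral_const_mul, integral_const_mul,
    my_integral_exp_neg_mul_Ioi hη, my_integral_exp_neg_mul_Ioi h1η]
  field_simp

lemma my_integ_max (A₀ K' η : ℝ) (hη : 0 < η) (hK : 0 ≤ K') (hA : 0 ≤ A₀) :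
    IntegrableOn
      (fun x => max (K' - A₀ * Real.exp (-x)) 0 * (η * Real.exp (-η * x)))
      (Set.Ioi 0) := by
  have hg : IntegrableOn (fun x => K' * (η * Real.exp (-η * x))) (Set.Ioi 0) :=
    ((exp_neg_integrableOn_Ioi 0 hη).const_mul η).const_mul K'
  refine hg.mono' ?_ ?_
  · exact (Continuous.aestronglyMeasurable (by continuity)).restrict
  · filter_upwards with x
    have hmax0 : (0:ℝ) ≤ max (K' - A₀ * Real.exp (-x)) 0 := le_max_right _ _
    have hmaxK : max (K' - A₀ * Real.exp (-x)) 0 ≤ K' :=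
      max_le (by nlinarith [Real.exp_pos (-x)]) hK
    have he : (0:ℝ) ≤ η * Real.exp (-η * x) :=
      mul_nonneg hη.le (Real.exp_pos _).le
    rw [Real.norm_eq_abs, abs_of_nonneg (mul_nonneg hmax0 he)]
    exact mul_le_mul_of_nonneg_right hmaxK he

lemma my_case_ge (η A₀ K' : ℝ) (hη : 0 < η) (hA : 0 < A₀) (hK : 0 < K') (h : A₀ ≤ K') :
    ∫ x in Set.Ioi (0:ℝ), max (K' - A₀ * Real.exp (-x)) 0 * (η * Real.exp (-η * x)) =
      K' - A₀ * (η / (1 + η)) := by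
  have hcg : ∀ x ∈ Set.Ioi (0:ℝ),
      max (K' - A₀ * Real.exp (-x)) 0 * (η * Real.exp (-η * x)) =
        (K' - A₀ * Real.exp (-x)) * (η * Real.exp (-η * x)) := by
    intro x hx
    have h1 : Real.exp (-x) < 1 := Real.exp_lt_one_iff.mpr (by simpa using hx)
    have : A₀ * Real.exp (-x) < K' := by nlinarith
    rw [max_eq_left (by linarith)]
  rw [setIntegral_congr_fun measurableSet_Ioi hcg, my_int_aux η hη A₀ K' 0]
  norm_num

lemma my_case_le (η A₀ K' : ℝ) (hη : 0 < η) (hA : 0 < A₀) (hK : 0 < K') (h : K' ≤ A₀) :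
    ∫ x in Set.Ioi (0:ℝ), max (K' - A₀ * Real.exp (-x)) 0 * (η * Real.exp (-η * x)) =
      (K' / A₀) ^ η * (K' / (1 + η)) := by
  set F := fun x => max (K' - A₀ * Real.exp (-x)) 0 * (η * Real.exp (-η * x)) with hF
  set c := Real.log (A₀ / K') with hcdef
  have hc : 0 ≤ c := Real.log_nonneg ((one_le_div hK).mpr h)
  have hec : Real.exp (-c) = K' / A₀ := by
    rw [Real.exp_neg, Real.exp_log (div_pos hA hK), inv_div]
  have hint := my_integ_max A₀ K' η hη hK.le hA.le
  have hsplit : ∫ x in Set.Ioi (0:ℝ), F x =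
      (∫ x in Set.Ioc 0 c, F x) + ∫ x in Set.Ioi c, F x := by
    rw [← Set.Ioc_union_Ioi_eq_Ioi hc,
      setIntegral_union Set.Ioc_disjoint_Ioi_same measurableSet_Ioi
        (hint.mono_set Set.Ioc_subset_Ioi_self) (hint.mono_set (Set.Ioi_subset_Ioi hc))]
  have h1 : ∫ x in Set.Ioc (0:ℝ) c, F x = 0 := by
    rw [setIntegral_congr_fun measurableSet_Ioc (g := fun _ => (0:ℝ))
      (fun x hx => ?_), integral_zero]
    have hxe : Real.exp (-c) ≤ Real.exp (-x) := Real.exp_le_exp.mpr (by linarith [hx.2])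
    rw [hec] at hxe
    have : K' ≤ A₀ * Real.exp (-x) := by
      rw [div_le_iff₀ hA] at hxe; nlinarith
    simp only [hF]
    rw [max_eq_right (by linarith), zero_mul]
  have h2 : ∫ x in Set.Ioi c, F x =
      K' * Real.exp (-η * c) - A₀ * (η / (1 + η)) * Real.exp (-(1 + η) * c) := by
    rw [setIntegral_congr_fun measurableSet_Ioi (fun x hx => ?_), my_int_aux η hη A₀ K' c]
    have hxe : Real.exp (-x) < Real.exp (-c) := Real.exp_lt_exp.mpr (by simp only [Set.mem_Ioi] at hx; linarith)
    rw [hec] at hxe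
    have : A₀ * Real.exp (-x) < K' := by
      rw [lt_div_iff₀ hA] at hxe; nlinarith
    simp only [hF]
    rw [max_eq_left (by linarith)]
  have hr : Real.exp (-η * c) = (K' / A₀) ^ η := by
    rw [Real.rpow_def_of_pos (div_pos hK hA)]
    congr 1
    rw [hcdef, Real.log_div hK.ne' hA.ne', Real.log_div hA.ne' hK.ne']
    ring
  have hr2 : Real.exp (-(1 + η) * c) = (K' / A₀) * (K' / A₀) ^ η := by
    rw [show -(1 + η) * c = -c + -η * c by ring, Real.exp_add, hec, hr]
  have h1η : (1:ℝ) + η ≠ 0 := by positivity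
  rw [hsplit, h1, h2, hr, hr2, zero_add]
  field_simp
  ring

/-- For Y with finite-mixture-of-exponentials density
f(x) = Σ ωᵢηᵢe^{−ηᵢx} on (0, ∞), A₀ > 0 and K' > 0, the perpetual-put payoff expectation:
if K' ≤ A₀ then E[(K' − A₀e^{−Y})⁺] = Σ ωᵢ (K'/A₀)^{ηᵢ}·K'/(1+ηᵢ), and
if K' ≥ A₀ then E[(K' − A₀e^{−Y})⁺] = Σ ωᵢ (K' − A₀·ηᵢ/(1+ηᵢ)). -/
theorem perpetual_put_mixture_of_exponentials
    (n : ℕ) (hn : 1 ≤ n) (η ω : Fin n → ℝ)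
    (hη : ∀ i, 0 < η i) (hω : ∀ i, 0 < ω i) (hsum : ∑ i, ω i = 1)
    (A₀ K' : ℝ) (hA : 0 < A₀) (hK : 0 < K') :
    (K' ≤ A₀ →
      (∫ x in Set.Ioi (0 : ℝ),
          max (K' - A₀ * Real.exp (-x)) 0 * (∑ i, ω i * η i * Real.exp (-(η i) * x))) =
        ∑ i, ω i * (K' / A₀) ^ (η i) * (K' / (1 + η i))) ∧
    (A₀ ≤ K' →
      (∫ x in Set.Ioi (0 : ℝ),
          max (K' - A₀ * Real.exp (-x)) 0 * (∑ i, ω i * η i * Real.exp (-(η i) * x))) =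
        ∑ i, ω i * (K' - A₀ * (η i / (1 + η i)))) := by
  have hswap : (∫ x in Set.Ioi (0 : ℝ),
        max (K' - A₀ * Real.exp (-x)) 0 * (∑ i, ω i * η i * Real.exp (-(η i) * x))) =
      ∑ i, ω i * ∫ x in Set.Ioi (0:ℝ),
        max (K' - A₀ * Real.exp (-x)) 0 * (η i * Real.exp (-(η i) * x)) := by
    have hpt : ∀ x : ℝ,
        max (K' - A₀ * Real.exp (-x)) 0 * (∑ i, ω i * η i * Real.exp (-(η i) * x)) =
          ∑ i, ω i * (max (K' - A₀ * Real.exp (-x)) 0 * (η i * Real.exp (-(η i) * x))) := by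
      intro x
      rw [Finset.mul_sum]
      exact Finset.sum_congr rfl (fun i _ => by ring)
    rw [setIntegral_congr_fun measurableSet_Ioi (fun x _ => hpt x),
      integral_finset_sum _ (fun i _ =>
        (my_integ_max A₀ K' (η i) (hη i) hK.le hA.le).const_mul (ω i))]
    exact Finset.sum_congr rfl (fun i _ => integral_const_mul _ _)
  constructor
  · intro h
    rw [hswap]
    refine Finset.sum_congr rfl (fun i _ => ?_)
    rw [my_case_le (η i) A₀ K' (hη i) hA hK h]
    ring
  · intro h
    rw [hswap]
    refine Finset.sum_congr rfl (fun i _ => ?_)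
    rw [my_case_ge (η i) A₀ K' (hη i) hA hK h]
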